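/- The normalized log-volume of the thin spherical shell in ℂ^m satisfies: lim_{δ→0} lim_{m→∞} (1/m)·ln Vol{x ∈ ℂ^m : |‖x‖² − m·P_x| ≤ δ·m} = ln(π·e·P_x), for any P_x > 0. -/

import Mathlib

open MeasureTheory Real Filter

/-- Volume of the closed complex ℓ²-ball of squared radius `R` in `ℂ^m`. -/
lemma shell_vol_le (m : ℕ) (hm : 0 < m) {R : ℝ} (hR : 0 ≤ R) :
    volume {x : Fin m → ℂ | ∑ i, ‖x i‖ ^ 2 ≤ R} =
      ENNReal.ofReal (π ^ m * R ^ m / m.factorial) := by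
  have : Nonempty (Fin m) := Fin.pos_iff_nonempty.mp hm
  have h := Complex.volume_sum_rpow_le (ι := Fin m) (one_le_two) (Real.sqrt R)
  have hset : {x : Fin m → ℂ | (∑ i, ‖x i‖ ^ (2:ℝ)) ^ ((1:ℝ)/2) ≤ Real.sqrt R}
      = {x : Fin m → ℂ | ∑ i, ‖x i‖ ^ 2 ≤ R} := by
    ext x
    have hpow : ∀ i, ‖x i‖ ^ (2:ℝ) = ‖x i‖ ^ (2:ℕ) := fun i => by
      rw [← Real.rpow_natCast ‖x i‖ 2]; norm_num
    have hs : (0:ℝ) ≤ ∑ i, ‖x i‖ ^ (2:ℕ) := by positivity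
    simp only [Set.mem_setOf_eq, hpow, ← Real.sqrt_eq_rpow]
    rw [Real.sqrt_le_sqrt_iff hR]
  rw [hset] at h
  rw [h, Fintype.card_fin]
  have h2 : (2:ℝ) / 2 + 1 = 2 := by norm_num
  have h3 : 2 * (m:ℝ) / 2 + 1 = (m:ℝ) + 1 := by ring
  rw [h2, h3, Real.Gamma_two, mul_one]
  rw [Real.Gamma_nat_eq_factorial]
  rw [← ENNReal.ofReal_pow (Real.sqrt_nonneg R), ← ENNReal.ofReal_mul (by positivity)]
  congr 1
  rw [pow_mul, Real.sq_sqrt hR]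
  ring

lemma shell_vol_lt (m : ℕ) (hm : 0 < m) (R : ℝ) :
    volume {x : Fin m → ℂ | ∑ i, ‖x i‖ ^ 2 < R} =
      ENNReal.ofReal (π ^ m * (max R 0) ^ m / m.factorial) := by
  have : Nonempty (Fin m) := Fin.pos_iff_nonempty.mp hm
  rcases le_or_gt R 0 with hR | hR
  · have hset : {x : Fin m → ℂ | ∑ i, ‖x i‖ ^ 2 < R} = ∅ := by
      ext x
      simp only [Set.mem_setOf_eq, Set.mem_empty_iff_false, iff_false, not_lt]
      exact le_trans hR (by positivity)
    rw [hset, measure_empty, max_eq_right hR, zero_pow hm.ne', mul_zero, zero_div,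
      ENNReal.ofReal_zero]
  · have h := Complex.volume_sum_rpow_lt (ι := Fin m) (one_le_two) (Real.sqrt R)
    have hset : {x : Fin m → ℂ | (∑ i, ‖x i‖ ^ (2:ℝ)) ^ ((1:ℝ)/2) < Real.sqrt R}
        = {x : Fin m → ℂ | ∑ i, ‖x i‖ ^ 2 < R} := by
      ext x
      have hpow : ∀ i, ‖x i‖ ^ (2:ℝ) = ‖x i‖ ^ (2:ℕ) := fun i => by
        rw [← Real.rpow_natCast ‖x i‖ 2]; norm_num
      have hs : (0:ℝ) ≤ ∑ i, ‖x i‖ ^ (2:ℕ) := by positivity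
      simp only [Set.mem_setOf_eq, hpow, ← Real.sqrt_eq_rpow]
      rw [Real.sqrt_lt_sqrt_iff hs]
    rw [hset] at h
    rw [h, Fintype.card_fin]
    have h2 : (2:ℝ) / 2 + 1 = 2 := by norm_num
    have h3 : 2 * (m:ℝ) / 2 + 1 = (m:ℝ) + 1 := by ring
    rw [h2, h3, Real.Gamma_two, mul_one]
    rw [Real.Gamma_nat_eq_factorial]
    rw [← ENNReal.ofReal_pow (Real.sqrt_nonneg R), ← ENNReal.ofReal_mul (by positivity)]
    congr 1
    rw [pow_mul, Real.sq_sqrt hR.le, max_eq_left hR.le]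
    ring

/-- Stirling-type estimate: `log m − (log m!)/m → 1`. -/
lemma shell_log_fact : Tendsto (fun m : ℕ => Real.log m - Real.log m.factorial / m)
    atTop (nhds 1) := by
  have hst := Stirling.tendsto_stirlingSeq_sqrt_pi
  have h1 : Tendsto (fun m : ℕ => Real.log (Stirling.stirlingSeq m)) atTop
      (nhds (Real.log (Real.sqrt π))) :=
    (Real.continuousAt_log (by positivity)).tendsto.comp hst
  have h2 : Tendsto (fun m : ℕ => Real.log (Stirling.stirlingSeq m) / m) atTop (nhds 0) :=
    h1.div_atTop tendsto_natCast_atTop_atTop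
  have h3 : Tendsto (fun m : ℕ => Real.log (2 * m) / (2 * m)) atTop (nhds 0) := by
    have := Real.isLittleO_log_id_atTop.tendsto_div_nhds_zero
    exact this.comp (tendsto_natCast_atTop_atTop.const_mul_atTop two_pos)
  have key : Tendsto (fun m : ℕ =>
      1 - Real.log (Stirling.stirlingSeq m) / m - Real.log (2 * m) / (2 * m))
      atTop (nhds 1) := by
    have := (tendsto_const_nhds (x := (1:ℝ)) (f := atTop (α := ℕ))).sub h2 |>.sub h3
    simpa using this
  refine key.congr' ?_
  filter_upwards [eventually_ge_atTop 1] with m hm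
  have hm0 : (0:ℝ) < m := by exact_mod_cast hm
  have hform := Stirling.log_stirlingSeq_formula m
  have hlogdiv : Real.log ((m:ℝ) / Real.exp 1) = Real.log m - 1 := by
    rw [Real.log_div hm0.ne' (Real.exp_ne_zero 1), Real.log_exp]
  have hfact : Real.log m.factorial =
      Real.log (Stirling.stirlingSeq m) + 1 / 2 * Real.log (2 * m) + m * (Real.log m - 1) := by
    rw [hform, hlogdiv]; ring
  rw [hfact]
  field_simp
  ring

/-- Normalized log-volume of the thin spherical shell in `ℂ^m`:
`lim_{δ→0⁺} lim_{m→∞} (1/m)·ln Vol{x : |‖x‖² − m P_x| ≤ δ m} = ln(π e P_x)`. -/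
theorem shell_log_volume_limit (Px : ℝ) (hPx : 0 < Px) :
    ∃ L : ℝ → ℝ,
      (∀ δ : ℝ, 0 < δ →
        Tendsto (fun m : ℕ =>
            (1 / (m : ℝ)) * Real.log
              ((volume {x : Fin m → ℂ | |(∑ i, ‖x i‖ ^ 2) - m * Px| ≤ δ * m}).toReal))
          atTop (nhds (L δ))) ∧
      Tendsto L (nhdsWithin 0 (Set.Ioi 0)) (nhds (Real.log (π * Real.exp 1 * Px))) := by
  refine ⟨fun δ => Real.log (π * Real.exp 1 * (Px + δ)), fun δ hδ => ?_, ?_⟩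
  · -- fixed δ > 0
    set q : ℝ := Px + δ with hq_def
    have hq : 0 < q := by positivity
    set c : ℝ := max (Px - δ) 0 with hc_def
    have hc : 0 ≤ c := le_max_right _ _
    have hcq : c < q := by
      apply max_lt _ hq
      simp only [hq_def]; linarith
    set r : ℝ := c / q with hr_def
    have hr0 : 0 ≤ r := div_nonneg hc hq.le
    have hr1 : r < 1 := (div_lt_one hq).mpr hcq
    have hLq : (fun δ => Real.log (π * Real.exp 1 * (Px + δ))) δ
        = Real.log (π * Real.exp 1 * q) := by rw [hq_def]
    clear_value r c q
    -- limit of the model sequence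
    have hmodel : Tendsto (fun m : ℕ =>
        Real.log π + Real.log q + (Real.log m - Real.log m.factorial / m)
          + (1 / (m:ℝ)) * Real.log (1 - r ^ m)) atTop
        (nhds (Real.log π + Real.log q + 1 + 0)) := by
      have hA : Tendsto (fun m : ℕ => (1 / (m:ℝ)) * Real.log (1 - r ^ m)) atTop (nhds 0) := by
        have hb : Tendsto (fun m : ℕ => Real.log (1 - r ^ m)) atTop (nhds 0) := by
          have hp : Tendsto (fun m : ℕ => (1:ℝ) - r ^ m) atTop (nhds 1) := by
            have := tendsto_pow_atTop_nhds_zero_of_lt_one hr0 hr1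
            simpa using (tendsto_const_nhds (x := (1:ℝ))).sub this
          have := (Real.continuousAt_log one_ne_zero).tendsto.comp hp
          simpa [Function.comp_def] using this
        simpa using tendsto_one_div_atTop_nhds_zero_nat.mul hb
      exact ((tendsto_const_nhds.add shell_log_fact)).add hA
    have hval : Real.log π + Real.log q + 1 + 0 = Real.log (π * Real.exp 1 * q) := by
      rw [Real.log_mul (by positivity) hq.ne', Real.log_mul pi_ne_zero (Real.exp_ne_zero 1),
        Real.log_exp]
      ring
    rw [hLq, ← hval]
    refine hmodel.congr' ?_
    filter_upwards [eventually_ge_atTop 1] with m hm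
    have hm0 : 0 < m := hm
    have hmr : (0:ℝ) < m := by exact_mod_cast hm
    -- compute the volume
    have hset : {x : Fin m → ℂ | |(∑ i, ‖x i‖ ^ 2) - m * Px| ≤ δ * m}
        = {x : Fin m → ℂ | ∑ i, ‖x i‖ ^ 2 ≤ m * q}
          \ {x : Fin m → ℂ | ∑ i, ‖x i‖ ^ 2 < m * (Px - δ)} := by
      ext x
      simp only [Set.mem_diff, Set.mem_setOf_eq, abs_le, not_lt]
      constructor
      · rintro ⟨h1, h2⟩
        constructor
        · simp only [hq_def]; nlinarith
        · nlinarith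
      · rintro ⟨h1, h2⟩
        constructor
        · nlinarith
        · simp only [hq_def] at h1; nlinarith
    have hsub : {x : Fin m → ℂ | ∑ i, ‖x i‖ ^ 2 < m * (Px - δ)}
        ⊆ {x : Fin m → ℂ | ∑ i, ‖x i‖ ^ 2 ≤ m * q} := by
      intro x hx
      simp only [Set.mem_setOf_eq] at hx ⊢
      have : m * (Px - δ) ≤ m * q := by
        simp only [hq_def]; nlinarith
      linarith
    have hmeas : NullMeasurableSet
        {x : Fin m → ℂ | ∑ i, ‖x i‖ ^ 2 < m * (Px - δ)} volume := by
      refine (measurableSet_lt ?_ measurable_const).nullMeasurableSet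
      exact Finset.measurable_sum _ fun i _ => (measurable_pi_apply i).norm.pow_const 2
    have hfin : volume {x : Fin m → ℂ | ∑ i, ‖x i‖ ^ 2 < m * (Px - δ)} ≠ ⊤ := by
      rw [shell_vol_lt m hm0]; exact ENNReal.ofReal_ne_top
    have hmax : max ((m:ℝ) * (Px - δ)) 0 = m * c := by
      rw [hc_def, mul_max_of_nonneg _ _ hmr.le, mul_zero]
    have hvol : (volume {x : Fin m → ℂ | |(∑ i, ‖x i‖ ^ 2) - m * Px| ≤ δ * m}).toReal
        = (π * m * q) ^ m * (1 - r ^ m) / m.factorial := by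
      rw [hset, measure_diff hsub hmeas hfin,
        shell_vol_le m hm0 (by positivity : (0:ℝ) ≤ (m:ℝ) * q), shell_vol_lt m hm0,
        ← ENNReal.ofReal_sub _ (by positivity), ENNReal.toReal_ofReal ?pos]
      case pos =>
        rw [hmax]
        have : ((m:ℝ) * c) ^ m ≤ ((m:ℝ) * q) ^ m :=
          pow_le_pow_left₀ (by positivity) (by nlinarith) m
        have hfp : (0:ℝ) < m.factorial := by exact_mod_cast m.factorial_pos
        have : π ^ m * ((m:ℝ) * c) ^ m ≤ π ^ m * ((m:ℝ) * q) ^ m := by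
          apply mul_le_mul_of_nonneg_left this (by positivity)
        rw [div_sub_div_same] at *
        apply div_nonneg _ hfp.le
        linarith
      rw [hmax]
      rw [hr_def]
      field_simp
      have hqm : q ^ m * q⁻¹ ^ m = 1 := by rw [← mul_pow, mul_inv_cancel₀ hq.ne', one_pow]
      linear_combination (π ^ m * (m:ℝ) ^ m * c ^ m) * hqm
    rw [hvol]
    have hrm : r ^ m < 1 := pow_lt_one₀ hr0 hr1 hm0.ne'
    have h1r : (0:ℝ) < 1 - r ^ m := by linarith
    have hfp : (0:ℝ) < m.factorial := by exact_mod_cast m.factorial_pos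
    rw [Real.log_div (by positivity) hfp.ne', Real.log_mul (by positivity) h1r.ne',
      Real.log_pow, Real.log_mul (by positivity) hq.ne',
      Real.log_mul pi_ne_zero hmr.ne']
    field_simp
    ring
  · -- limit as δ → 0⁺
    have hcont : ContinuousAt (fun δ : ℝ => Real.log (π * Real.exp 1 * (Px + δ))) 0 := by
      apply Real.continuousAt_log ?_ |>.comp (by fun_prop)
      simp only [add_zero]
      positivity
    have := hcont.tendsto
    simp only [add_zero] at this
    exact this.mono_left nhdsWithin_le_nhds
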